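/- If Y, Z are finite strings of positive integers with [0; Ȳ] < [0; Z̄] (periodic continued fractions), then [0; Z, Ȳ] > [0; Ȳ]. -/

import Mathlib

noncomputable def cf (S : List ℕ) (x : ℝ) : ℝ :=
  S.foldr (fun a y => 1 / ((a : ℝ) + y)) x

lemma cf_moebius (Z : List ℕ) (hZ : Z ≠ []) (hpos : ∀ a ∈ Z, 1 ≤ a) :
    ∃ p q r s : ℕ, 1 ≤ q ∧ 1 ≤ r ∧ 1 ≤ s ∧
      ∀ x : ℝ, 0 ≤ x → cf Z x = ((p:ℝ)*x+q)/((r:ℝ)*x+s) := by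
  induction Z with
  | nil => simp at hZ
  | cons a T ih =>
    have ha : 1 ≤ a := hpos a (List.mem_cons_self)
    by_cases hT : T = []
    · subst hT
      refine ⟨0, 1, 1, a, le_refl _, le_refl _, ha, fun x hx => ?_⟩
      have h1 : (0:ℝ) < (a:ℝ) + x := by
        have : (1:ℝ) ≤ (a:ℝ) := by exact_mod_cast ha
        linarith
      show 1 / ((a:ℝ) + x) = _
      have h2 : (0:ℝ) < (1:ℝ)*x + (a:ℝ) := by
        have : (1:ℝ) ≤ (a:ℝ) := by exact_mod_cast ha
        linarith
      push_cast
      rw [div_eq_div_iff h1.ne' h2.ne']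
      ring
    · obtain ⟨p, q, r, s, hq, hr, hs, h⟩ := ih hT
        (fun b hb => hpos b (List.mem_cons_of_mem _ hb))
      refine ⟨r, s, a*r+p, a*s+q, hs, ?_, ?_, fun x hx => ?_⟩
      · have h1 : 1 ≤ a*r := Nat.one_le_iff_ne_zero.mpr (by positivity)
        omega
      · have h1 : 1 ≤ a*s := Nat.one_le_iff_ne_zero.mpr (by positivity)
        omega
      · have hr' : (1:ℝ) ≤ (r:ℝ) := by exact_mod_cast hr
        have hs' : (1:ℝ) ≤ (s:ℝ) := by exact_mod_cast hs
        have hq' : (1:ℝ) ≤ (q:ℝ) := by exact_mod_cast hq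
        have ha' : (1:ℝ) ≤ (a:ℝ) := by exact_mod_cast ha
        have hp' : (0:ℝ) ≤ (p:ℝ) := Nat.cast_nonneg _
        have hden : (0:ℝ) < (r:ℝ)*x + s := by nlinarith
        have hnum : (0:ℝ) ≤ (p:ℝ)*x + q := by nlinarith
        have hcf : cf T x = ((p:ℝ)*x+q)/((r:ℝ)*x+s) := h x hx
        have hpos2 : (0:ℝ) < (a:ℝ) + cf T x := by
          rw [hcf]; positivity
        show 1 / ((a:ℝ) + cf T x) = _
        rw [hcf] at hpos2 ⊢
        have hden2 : (0:ℝ) < ((a:ℝ)*r+p)*x + ((a:ℝ)*s+q) := by nlinarith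
        push_cast
        rw [div_eq_div_iff hpos2.ne' hden2.ne']
        field_simp
        ring
/-- If `[0;Ȳ] < [0;Z̄]` then `[0;Z,Ȳ] > [0;Ȳ]`. Here the periodic points
`y = [0;Ȳ]`, `z = [0;Z̄]` are the fixed points in `[0,1]` of `cf Y`, `cf Z`,
and `[0;Z,Ȳ] = cf Z y`. -/
theorem prepend_of_periodic_lt (Y Z : List ℕ) (hY : Y ≠ []) (hZ : Z ≠ [])
    (hYpos : ∀ a ∈ Y, 1 ≤ a) (hZpos : ∀ a ∈ Z, 1 ≤ a)
    (y z : ℝ) (hy : y ∈ Set.Icc (0:ℝ) 1) (hfy : cf Y y = y)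
    (hz : z ∈ Set.Icc (0:ℝ) 1) (hfz : cf Z z = z)
    (hlt : y < z) : y < cf Z y := by
  obtain ⟨p, q, r, s, hq, hr, hs, h⟩ := cf_moebius Z hZ hZpos
  obtain ⟨hy0, hy1⟩ := hy
  obtain ⟨hz0, hz1⟩ := hz
  have hr' : (1:ℝ) ≤ (r:ℝ) := by exact_mod_cast hr
  have hs' : (1:ℝ) ≤ (s:ℝ) := by exact_mod_cast hs
  have hq' : (1:ℝ) ≤ (q:ℝ) := by exact_mod_cast hq
  have hp' : (0:ℝ) ≤ (p:ℝ) := Nat.cast_nonneg _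
  have hdz : (0:ℝ) < (r:ℝ)*z + s := by nlinarith
  have hdy : (0:ℝ) < (r:ℝ)*y + s := by nlinarith
  have hez : (p:ℝ)*z + q = z * ((r:ℝ)*z + s) := by
    rw [h z hz0] at hfz
    field_simp at hfz
    linarith [hfz]
  rw [h y hy0]
  rw [lt_div_iff₀ hdy]
  -- goal: y * (r*y+s) < p*y+q
  have hz0' : (0:ℝ) < z := lt_of_le_of_lt hy0 hlt
  have hpz : (p:ℝ) * z < (r:ℝ)*z*z + s*z := by nlinarith
  have hp_lt : (p:ℝ) < (r:ℝ)*z + s := by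
    have := (mul_lt_mul_iff_left₀ hz0').mp (by nlinarith : (p:ℝ)*z < ((r:ℝ)*z+s)*z)
    exact this
  have key : (0:ℝ) < (z - y) * ((r:ℝ)*(z+y) + s - p) := by
    apply mul_pos (sub_pos.mpr hlt)
    nlinarith
  nlinarith [key]
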